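/- Let F be a field of characteristic 0, A an additive abelian group, T an F-vector space, and φ : T × A → F a map that is F-linear in the first variable and additive in the second. Then the generalized Witt algebra W(A,T,φ) is a simple Lie algebra if and only if A ≠ 0 and φ is nondegenerate. -/

import Mathlib

/-! Generalized Witt algebras `W(A,T,φ)` over a field `F` of characteristic `0`,
following Djokovic-Zhao. Here `A` is an (additive) abelian group, `T` an
`F`-vector space, and `φ : T × A → F` is `F`-linear in the first variable and
additive in the second (encoded as `φ : T →ₗ[F] (A →+ F)`). -/

namespace GW

variable {F : Type*} [Field F]
variable {A : Type*} [AddCommGroup A]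
variable {T : Type*} [AddCommGroup T] [Module F T]
variable (φ : T →ₗ[F] (A →+ F))

/-- The bracket on finitely supported functions `A →₀ T`: the bilinear extension of
`[t^α a, t^β b] = t^(α+β) (φ a β • b - φ b α • a)`. -/
noncomputable def brk (x y : A →₀ T) : A →₀ T :=
  x.sum fun α a => y.sum fun β b => Finsupp.single (α + β) (φ a β • b - φ b α • a)

lemma brk_zero_left (y : A →₀ T) : brk φ 0 y = 0 := by
  simp [brk]

lemma brk_zero_right (x : A →₀ T) : brk φ x 0 = 0 := by
  simp [brk]

lemma brk_single_single (α β : A) (a b : T) :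
    brk φ (Finsupp.single α a) (Finsupp.single β b)
      = Finsupp.single (α + β) (φ a β • b - φ b α • a) := by
  unfold brk
  rw [Finsupp.sum_single_index, Finsupp.sum_single_index]
  · simp
  · simp

lemma brk_add_left (x x' y : A →₀ T) : brk φ (x + x') y = brk φ x y + brk φ x' y := by
  unfold brk
  rw [Finsupp.sum_add_index']
  · intro α; simp
  · intro α a a'
    rw [← Finsupp.sum_add]
    congr 1
    funext β b
    rw [← Finsupp.single_add]
    congr 1
    simp only [map_add, LinearMap.add_apply, AddMonoidHom.add_apply, add_smul, smul_add]
    abel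

lemma brk_add_right (x y y' : A →₀ T) : brk φ x (y + y') = brk φ x y + brk φ x y' := by
  unfold brk
  rw [← Finsupp.sum_add]
  congr 1
  funext α a
  rw [Finsupp.sum_add_index']
  · intro β; simp
  · intro β b b'
    rw [← Finsupp.single_add]
    congr 1
    simp only [map_add, LinearMap.add_apply, AddMonoidHom.add_apply, add_smul, smul_add]
    abel

lemma brk_neg_swap (x y : A →₀ T) : brk φ y x = - brk φ x y := by
  unfold brk
  rw [Finsupp.sum_comm]
  rw [← Finsupp.sum_neg]
  congr 1
  funext α a
  rw [← Finsupp.sum_neg]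
  congr 1
  funext β b
  rw [← Finsupp.single_neg, add_comm β α]
  congr 1
  abel

lemma brk_smul_right (c : F) (x y : A →₀ T) : brk φ x (c • y) = c • brk φ x y := by
  unfold brk
  rw [Finsupp.smul_sum]
  congr 1
  funext α a
  rw [Finsupp.sum_smul_index', Finsupp.smul_sum]
  · congr 1
    funext β b
    rw [Finsupp.smul_single]
    congr 1
    simp only [map_smul, LinearMap.smul_apply, AddMonoidHom.smul_apply, smul_sub, smul_smul,
      smul_eq_mul]
    rw [mul_comm]
  · intro β; simp

lemma brk_self [CharZero F] (x : A →₀ T) : brk φ x x = 0 := by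
  have h : brk φ x x = -brk φ x x := brk_neg_swap φ x x
  have h2 : (2 : F) • brk φ x x = 0 := by
    rw [two_smul]
    nth_rewrite 2 [h]
    simp
  calc brk φ x x = (2 : F)⁻¹ • ((2 : F) • brk φ x x) :=
        (inv_smul_smul₀ two_ne_zero _).symm
    _ = 0 := by rw [h2, smul_zero]

lemma brk_leibniz (x y z : A →₀ T) :
    brk φ x (brk φ y z) = brk φ (brk φ x y) z + brk φ y (brk φ x z) := by
  induction x using Finsupp.induction_linear with
  | zero => simp [brk_zero_left, brk_zero_right]
  | add f g hf hg =>
      simp only [brk_add_left, brk_add_right, hf, hg]; abel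
  | single α a =>
    induction y using Finsupp.induction_linear with
    | zero => simp [brk_zero_left, brk_zero_right]
    | add f g hf hg =>
        simp only [brk_add_left, brk_add_right, hf, hg]; abel
    | single β b =>
      induction z using Finsupp.induction_linear with
      | zero => simp [brk_zero_left, brk_zero_right]
      | add f g hf hg =>
          simp only [brk_add_left, brk_add_right, hf, hg]; abel
      | single γ c =>
        rw [brk_single_single, brk_single_single, brk_single_single, brk_single_single,
          brk_single_single, brk_single_single]
        rw [show β + (α + γ) = α + β + γ by abel, show α + (β + γ) = α + β + γ by abel,
          ← Finsupp.single_add]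
        congr 1
        simp only [map_add, map_sub, map_smul, LinearMap.sub_apply, LinearMap.smul_apply,
          AddMonoidHom.add_apply, AddMonoidHom.sub_apply, AddMonoidHom.smul_apply,
          smul_eq_mul, smul_sub, sub_smul, add_smul, smul_smul]
        ring_nf
        module

variable (F A T) in
/-- The carrier of the generalized Witt algebra `W(A,T,φ)`: finitely supported
functions from `A` to `T`, where `t^α ∂` corresponds to the function supported
at `α` with value `∂`. -/
@[nolint unusedArguments]
def W (_φ : T →ₗ[F] (A →+ F)) : Type _ := A →₀ T

noncomputable instance : AddCommGroup (W F A T φ) := inferInstanceAs (AddCommGroup (A →₀ T))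

noncomputable instance : Module F (W F A T φ) := inferInstanceAs (Module F (A →₀ T))

/-- The element `t^α ∂` of the generalized Witt algebra. -/
noncomputable def tt (α : A) (d : T) : W F A T φ := Finsupp.single α d

/-- The underlying finitely supported function of an element of `W(A,T,φ)`. -/
def toF (x : W F A T φ) : A →₀ T := x

/-- The Lie ring structure on the generalized Witt algebra `W(A,T,φ)`, with bracket
determined by `[t^α ∂, t^β ∂'] = t^(α+β) (φ(∂,β) • ∂' - φ(∂',α) • ∂)`. -/
noncomputable instance [CharZero F] : LieRing (W F A T φ) :=
  { (inferInstance : AddCommGroup (A →₀ T)) with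
    bracket := fun x y => brk φ (toF φ x) (toF φ y)
    add_lie := fun x y z => brk_add_left φ x y z
    lie_add := fun x y z => brk_add_right φ x y z
    lie_self := fun x => brk_self φ x
    leibniz_lie := fun x y z => brk_leibniz φ x y z }

/-- The generalized Witt algebra `W(A,T,φ)` as a Lie algebra over `F`. -/
noncomputable instance [CharZero F] : LieAlgebra F (W F A T φ) :=
  { (inferInstance : Module F (A →₀ T)) with
    lie_smul := fun c x y => brk_smul_right φ c x y }

@[simp] theorem bracket_tt [CharZero F] (α β : A) (a b : T) :
    ⁅tt φ α a, tt φ β b⁆ = tt φ (α + β) (φ a β • b - φ b α • a) :=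
  brk_single_single φ α β a b

/-- Nondegeneracy of the map `φ`. -/
def Nondeg : Prop :=
  (∀ α : A, (∀ d : T, φ d α = 0) → α = 0) ∧ (∀ d : T, (∀ α : A, φ d α = 0) → d = 0)

/-- `(A', T')` is a nondegenerate pair for `φ`. -/
def NondegPair (A' : AddSubgroup A) (T' : Submodule F T) : Prop :=
  (∀ d ∈ T', (∀ α ∈ A', φ d α = 0) → d = 0) ∧
  (∀ α ∈ A', (∀ d ∈ T', φ d α = 0) → α = 0)

/-- The subset (in fact Lie subalgebra) of `W(A,T,φ)` consisting of the finitely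
supported functions supported in `A'` with values in `T'`. -/
def supportedIn (A' : AddSubgroup A) (T' : Submodule F T) : Set (W F A T φ) :=
  {x | (∀ α : A, toF φ x α ∈ T') ∧ ∀ α : A, α ∉ A' → toF φ x α = 0}

end GW

namespace GW

section Aux

variable {F : Type*} [Field F]
variable {A : Type*} [AddCommGroup A]
variable {T : Type*} [AddCommGroup T] [Module F T]
variable (φ : T →ₗ[F] (A →+ F))

lemma bracket_def [CharZero F] (x y : W F A T φ) :
    ⁅x, y⁆ = brk φ (toF φ x) (toF φ y) := rfl

lemma toF_add (x y : W F A T φ) : toF φ (x + y) = toF φ x + toF φ y := rfl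
lemma toF_smul (c : F) (x : W F A T φ) : toF φ (c • x) = c • toF φ x := rfl
lemma toF_sub (x y : W F A T φ) : toF φ (x - y) = toF φ x - toF φ y := rfl
lemma toF_zero : toF φ (0 : W F A T φ) = 0 := rfl

lemma tt_smul (α : A) (c : F) (d : T) : tt φ α (c • d) = c • tt φ α d :=
  (Finsupp.smul_single _ _ _).symm

lemma tt_add (α : A) (d e : T) : tt φ α (d + e) = tt φ α d + tt φ α e :=
  Finsupp.single_add _ _ _

lemma brk_zeroSingle_apply (d : T) (x : A →₀ T) (γ : A) :
    (brk φ (Finsupp.single 0 d) x) γ = φ d γ • x γ := by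
  induction x using Finsupp.induction_linear with
  | zero => simp [brk_zero_right]
  | add f g hf hg => rw [brk_add_right]; simp [hf, hg, smul_add]
  | single β b =>
      rw [brk_single_single, zero_add, map_zero, zero_smul, sub_zero]
      rcases eq_or_ne β γ with rfl | h
      · simp
      · simp [Finsupp.single_apply, h]

lemma abelian_of_phi_zero [CharZero F] (h : ∀ (d : T) (α : A), φ d α = 0) :
    IsLieAbelian (W F A T φ) := by
  constructor
  intro x y
  rw [bracket_def]
  show brk φ (toF φ x) (toF φ y) = 0
  induction (toF φ x) using Finsupp.induction_linear with
  | zero => exact brk_zero_left φ _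
  | add f g hf hg => rw [brk_add_left, hf, hg, add_zero]
  | single α a =>
      induction (toF φ y) using Finsupp.induction_linear with
      | zero => exact brk_zero_right φ _
      | add f g hf hg => rw [brk_add_right, hf, hg, add_zero]
      | single β b => rw [brk_single_single]; simp [h]

end Aux

section Generation

variable {F : Type*} [Field F] [CharZero F]
variable {A : Type*} [AddCommGroup A]
variable {T : Type*} [AddCommGroup T] [Module F T]
variable (φ : T →ₗ[F] (A →+ F))

lemma lie_mem_left (I : LieIdeal F (W F A T φ)) {m : W F A T φ} (x : W F A T φ)
    (hm : m ∈ I) : ⁅m, x⁆ ∈ I := by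
  have h : ⁅m, x⁆ = -⁅x, m⁆ := (lie_skew m x).symm
  rw [h]
  exact neg_mem (I.lie_mem hm)

/-- One-step move: from `t^β b ∈ I` to `t^α b ∈ I` when `φ b α ≠ 2 φ b β`. -/
lemma step_move (I : LieIdeal F (W F A T φ)) {β : A} {b : T}
    (hb : tt φ β b ∈ I) (α : A) (h : φ b α ≠ 2 * φ b β) : tt φ α b ∈ I := by
  have h1 : ⁅tt φ (α - β) b, tt φ β b⁆ ∈ I := I.lie_mem hb
  rw [bracket_tt, sub_add_cancel] at h1
  set c := φ b β - φ b (α - β) with hc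
  have hc0 : c ≠ 0 := by
    rw [hc, AddMonoidHom.map_sub]
    intro hh
    apply h
    linear_combination -hh
  have key : tt φ α b = c⁻¹ • tt φ α (c • b) := by
    rw [tt_smul, smul_smul, inv_mul_cancel₀ hc0, one_smul]
  rw [key]
  refine SMulMemClass.smul_mem _ ?_
  have e : φ b β • b - φ b (α - β) • b = c • b := by rw [hc, sub_smul]
  rwa [e] at h1

lemma move_all (hnd : Nondeg φ) (I : LieIdeal F (W F A T φ)) {β : A} {b : T}
    (hb0 : b ≠ 0) (hb : tt φ β b ∈ I) (α : A) : tt φ α b ∈ I := by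
  obtain ⟨γ₀, hγ₀⟩ : ∃ γ, φ b γ ≠ 0 := by
    by_contra hcon; push_neg at hcon; exact hb0 (hnd.2 b hcon)
  set c₀ := φ b γ₀ with hc₀
  obtain ⟨n, hn1, hn2⟩ :
      ∃ n : ℕ, (n : F) * c₀ ≠ 2 * φ b β ∧ φ b α ≠ 2 * ((n : F) * c₀) := by
    by_contra hcon
    push_neg at hcon
    have comb : ∀ m k : ℕ, φ b α = 2 * ((m : F) * c₀) → φ b α = 2 * ((k : F) * c₀) →
        (m : F) = (k : F) := by
      intro m k h1 h2
      rw [h1] at h2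
      exact mul_right_cancel₀ hγ₀ (mul_left_cancel₀ two_ne_zero h2)
    have cancel : ∀ m k : ℕ, (m : F) * c₀ = (k : F) * c₀ → (m : F) = (k : F) :=
      fun m k h => mul_right_cancel₀ hγ₀ h
    by_cases e1 : ((1 : ℕ) : F) * c₀ = 2 * φ b β
    · have e2 : ((2 : ℕ) : F) * c₀ ≠ 2 * φ b β := by
        rw [← e1]; intro hh; have := cancel 2 1 hh; norm_num at this
      have e3 : ((3 : ℕ) : F) * c₀ ≠ 2 * φ b β := by
        rw [← e1]; intro hh; have := cancel 3 1 hh; norm_num at this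
      have := comb 2 3 (hcon 2 e2) (hcon 3 e3)
      norm_num at this
    · have s1 := hcon 1 e1
      by_cases e2 : ((2 : ℕ) : F) * c₀ = 2 * φ b β
      · have e3 : ((3 : ℕ) : F) * c₀ ≠ 2 * φ b β := by
          rw [← e2]; intro hh; have := cancel 3 2 hh; norm_num at this
        have := comb 1 3 s1 (hcon 3 e3)
        norm_num at this
      · have := comb 1 2 s1 (hcon 2 e2)
        norm_num at this
  have hμ : φ b (n • γ₀) = (n : F) * c₀ := by
    rw [AddMonoidHom.map_nsmul, nsmul_eq_mul, hc₀]
  have step1 : tt φ (n • γ₀) b ∈ I := step_move φ I hb _ (by rw [hμ]; exact hn1)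
  exact step_move φ I step1 α (by rw [hμ]; exact hn2)

lemma all_mem (hnd : Nondeg φ) (I : LieIdeal F (W F A T φ)) {β : A} {b : T}
    (hb0 : b ≠ 0) (hb : tt φ β b ∈ I) (α : A) (d : T) : tt φ α d ∈ I := by
  obtain ⟨γ₀, hγ₀⟩ : ∃ γ, φ b γ ≠ 0 := by
    by_contra hcon; push_neg at hcon; exact hb0 (hnd.2 b hcon)
  have hall : ∀ γ, tt φ γ b ∈ I := move_all φ hnd I hb0 hb
  have h1 : ⁅tt φ (α - γ₀) b, tt φ γ₀ d⁆ ∈ I :=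
    lie_mem_left φ I _ (hall (α - γ₀))
  rw [bracket_tt, sub_add_cancel] at h1
  have h2 : φ d (α - γ₀) • tt φ α b ∈ I :=
    SMulMemClass.smul_mem _ (hall α)
  have h3 : tt φ α (φ b γ₀ • d) ∈ I := by
    have e : tt φ α (φ b γ₀ • d) =
        tt φ α (φ b γ₀ • d - φ d (α - γ₀) • b) + φ d (α - γ₀) • tt φ α b := by
      rw [← tt_smul, ← tt_add, sub_add_cancel]
    rw [e]
    exact add_mem h1 h2
  have key : tt φ α d = (φ b γ₀)⁻¹ • tt φ α (φ b γ₀ • d) := by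
    rw [tt_smul, smul_smul, inv_mul_cancel₀ hγ₀, one_smul]
  rw [key]
  exact SMulMemClass.smul_mem _ h3

lemma exists_single_mem (hnd : Nondeg φ) (I : LieIdeal F (W F A T φ))
    (hI : I ≠ ⊥) : ∃ (β : A) (b : T), b ≠ 0 ∧ tt φ β b ∈ I := by
  classical
  obtain ⟨x, hxI, hx0⟩ : ∃ x, x ∈ I ∧ x ≠ 0 := by
    by_contra hcon
    push_neg at hcon
    exact hI ((LieSubmodule.eq_bot_iff I).2 fun m hm => hcon m hm)
  have key : ∀ n (x : W F A T φ), x ∈ I → x ≠ 0 → (toF φ x).support.card ≤ n →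
      ∃ (β : A) (b : T), b ≠ 0 ∧ tt φ β b ∈ I := by
    intro n
    induction n with
    | zero =>
        intro x hxI hx0 hc
        exact absurd (Finsupp.support_eq_empty.mp
          (Finset.card_eq_zero.mp (Nat.le_zero.mp hc))) hx0
    | succ n ih =>
        intro x hxI hx0 hc
        by_cases hone : (toF φ x).support.card = 1
        · obtain ⟨β, hb, hx⟩ := Finsupp.card_support_eq_one.mp hone
          refine ⟨β, toF φ x β, hb, ?_⟩
          have e : x = tt φ β (toF φ x β) := hx
          rw [← e]
          exact hxI
        · have h0 : (toF φ x).support.card ≠ 0 := fun hh =>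
            hx0 (Finsupp.support_eq_empty.mp (Finset.card_eq_zero.mp hh))
          have h2 : 1 < (toF φ x).support.card := by omega
          obtain ⟨β₁, hβ₁, β₂, hβ₂, hne⟩ := Finset.one_lt_card.mp h2
          obtain ⟨e, he⟩ : ∃ e : T, φ e (β₁ - β₂) ≠ 0 := by
            by_contra hcon
            push_neg at hcon
            exact hne (sub_eq_zero.mp (hnd.1 _ hcon))
          have hne2 : φ e β₂ ≠ φ e β₁ := by
            intro hh
            apply he
            rw [AddMonoidHom.map_sub, hh, sub_self]
          set y : W F A T φ := ⁅tt φ 0 e, x⁆ - φ e β₁ • x with hy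
          have hyI : y ∈ I := sub_mem (I.lie_mem hxI) (SMulMemClass.smul_mem _ hxI)
          have hyval : ∀ γ, toF φ y γ = (φ e γ - φ e β₁) • toF φ x γ := by
            intro γ
            show (brk φ (Finsupp.single 0 e) (toF φ x) - φ e β₁ • toF φ x) γ = _
            rw [Finsupp.sub_apply, Finsupp.smul_apply, brk_zeroSingle_apply, sub_smul]
          have hy2 : toF φ y β₂ ≠ 0 := by
            rw [hyval]
            exact smul_ne_zero (sub_ne_zero.mpr hne2) (Finsupp.mem_support_iff.mp hβ₂)
          have hy0 : y ≠ 0 := by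
            intro hh
            apply hy2
            rw [hh]
            rfl
          have hsub : (toF φ y).support ⊆ (toF φ x).support.erase β₁ := by
            intro γ hγ
            have hγv := Finsupp.mem_support_iff.mp hγ
            rw [hyval] at hγv
            rw [Finset.mem_erase]
            refine ⟨?_, Finsupp.mem_support_iff.mpr fun hz => hγv (by rw [hz, smul_zero])⟩
            rintro rfl
            exact hγv (by rw [sub_self, zero_smul])
          have hcy : (toF φ y).support.card ≤ n := by
            have h3 := Finset.card_le_card hsub
            rw [Finset.card_erase_of_mem hβ₁] at h3
            omega
          exact ih y hyI hy0 hcy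
  exact key _ x hxI hx0 le_rfl

lemma ideal_eq_top (hnd : Nondeg φ) (I : LieIdeal F (W F A T φ)) (hI : I ≠ ⊥) :
    I = ⊤ := by
  obtain ⟨β, b, hb0, hb⟩ := exists_single_mem φ hnd I hI
  have hall : ∀ (α : A) (d : T), tt φ α d ∈ I := all_mem φ hnd I hb0 hb
  rw [eq_top_iff]
  intro x _
  show x ∈ I
  have : ∀ z : A →₀ T, (z : W F A T φ) ∈ I := by
    intro z
    induction z using Finsupp.induction_linear with
    | zero => exact zero_mem I
    | add f g hf hg => exact add_mem hf hg
    | single α a => exact hall α a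
  exact this (toF φ x)

end Generation

section Degenerate

variable {F : Type*} [Field F] [CharZero F]
variable {A : Type*} [AddCommGroup A]
variable {T : Type*} [AddCommGroup T] [Module F T]
variable (φ : T →ₗ[F] (A →+ F))

/-- The ideal of functions with values in `ker φ`. -/
def kerIdeal : LieIdeal F (W F A T φ) where
  carrier := {x | ∀ α, toF φ x α ∈ LinearMap.ker φ}
  add_mem' := by
    intro a b ha hb α
    show (toF φ a + toF φ b) α ∈ _
    rw [Finsupp.add_apply]
    exact add_mem (ha α) (hb α)
  zero_mem' := by
    intro α
    show (0 : A →₀ T) α ∈ _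
    rw [Finsupp.zero_apply]
    exact zero_mem _
  smul_mem' := by
    intro c x hx α
    show (c • toF φ x) α ∈ _
    rw [Finsupp.smul_apply]
    exact Submodule.smul_mem _ c (hx α)
  lie_mem := by
    intro x m hm
    intro γ
    classical
    show brk φ (toF φ x) (toF φ m) γ ∈ LinearMap.ker φ
    rw [brk]
    rw [Finsupp.sum_apply]
    rw [Finsupp.sum]
    refine Submodule.sum_mem _ fun α hα => ?_
    rw [Finsupp.sum_apply, Finsupp.sum]
    refine Submodule.sum_mem _ fun β hβ => ?_
    rw [Finsupp.single_apply]
    split_ifs with hif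
    · have h0 : φ (toF φ m β) α = 0 := by
        rw [LinearMap.mem_ker.mp (hm β)]
        rfl
      rw [h0, zero_smul, sub_zero]
      exact Submodule.smul_mem _ _ (hm β)
    · exact zero_mem _
end Degenerate

section Quotient

variable {F : Type*} [Field F]
variable {A : Type*} [AddCommGroup A]
variable {T : Type*} [AddCommGroup T] [Module F T]
variable (φ : T →ₗ[F] (A →+ F))

/-- The subgroup of `A` on which `φ` vanishes identically. -/
def bigKer : AddSubgroup A where
  carrier := {α | ∀ d, φ d α = 0}
  zero_mem' := fun d => map_zero (φ d)
  add_mem' := by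
    intro a b ha hb d
    rw [map_add, ha d, hb d, add_zero]
  neg_mem' := by
    intro a ha d
    rw [map_neg, ha d, neg_zero]

/-- The map induced by `φ` on the quotient `A ⧸ bigKer φ`. -/
noncomputable def phibar : T →ₗ[F] ((A ⧸ bigKer φ) →+ F) where
  toFun d := QuotientAddGroup.lift (bigKer φ) (φ d) (fun a ha => ha d)
  map_add' d e := by
    ext q
    show φ (d + e) q = φ d q + φ e q
    rw [map_add]
    rfl
  map_smul' c d := by
    ext q
    show φ (c • d) q = c • φ d q
    rw [map_smul]
    rfl

@[simp] lemma phibar_mk (d : T) (a : A) :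
    phibar φ d ((a : A ⧸ bigKer φ)) = φ d a := rfl

/-- Pushforward of finitely supported functions along `A → A ⧸ bigKer φ`. -/
noncomputable def Smap : (A →₀ T) →ₗ[F] ((A ⧸ bigKer φ) →₀ T) :=
  Finsupp.lmapDomain T F (QuotientAddGroup.mk : A → A ⧸ bigKer φ)

lemma Smap_single (γ : A) (v : T) :
    Smap φ (Finsupp.single γ v) = Finsupp.single ((γ : A ⧸ bigKer φ)) v := by
  rw [Smap, Finsupp.lmapDomain_apply, Finsupp.mapDomain_single]

lemma Smap_brk (x y : A →₀ T) :
    Smap φ (brk φ x y) = brk (phibar φ) (Smap φ x) (Smap φ y) := by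
  induction x using Finsupp.induction_linear with
  | zero => simp [brk_zero_left]
  | add f g hf hg => rw [brk_add_left, map_add, map_add, brk_add_left, hf, hg]
  | single α a =>
    induction y using Finsupp.induction_linear with
    | zero => simp [brk_zero_right]
    | add f g hf hg => rw [brk_add_right, map_add, map_add, brk_add_right, hf, hg]
    | single β b =>
        rw [brk_single_single, Smap_single, Smap_single, Smap_single, brk_single_single,
          phibar_mk, phibar_mk]
        congr 1

/-- The kernel of `Smap` as a Lie ideal. -/
noncomputable def quotKerIdeal [CharZero F] : LieIdeal F (W F A T φ) where
  carrier := {x | Smap φ (toF φ x) = 0}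
  add_mem' := by
    intro a b ha hb
    show Smap φ (toF φ (a + b)) = 0
    rw [toF_add, map_add]
    rw [show Smap φ (toF φ a) = 0 from ha, show Smap φ (toF φ b) = 0 from hb, add_zero]
  zero_mem' := by
    show Smap φ (toF φ (0 : W F A T φ)) = 0
    rw [toF_zero, map_zero]
  smul_mem' := by
    intro c x hx
    show Smap φ (toF φ (c • x)) = 0
    rw [toF_smul, map_smul, show Smap φ (toF φ x) = 0 from hx, smul_zero]
  lie_mem := by
    intro x m hm
    show Smap φ (toF φ ⁅x, m⁆) = 0
    have e : toF φ ⁅x, m⁆ = brk φ (toF φ x) (toF φ m) := rfl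
    rw [e, Smap_brk, show Smap φ (toF φ m) = 0 from hm, brk_zero_right]

end Quotient

section MemLemmas

variable {F : Type*} [Field F]
variable {A : Type*} [AddCommGroup A]
variable {T : Type*} [AddCommGroup T] [Module F T]
variable (φ : T →ₗ[F] (A →+ F))

lemma tt_eq_zero_iff (α : A) (v : T) : tt φ α v = 0 ↔ v = 0 :=
  Finsupp.single_eq_zero

lemma mem_kerIdeal_iff [CharZero F] (x : W F A T φ) :
    x ∈ kerIdeal φ ↔ ∀ α, toF φ x α ∈ LinearMap.ker φ := Iff.rfl

lemma mem_quotKerIdeal_iff [CharZero F] (x : W F A T φ) :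
    x ∈ quotKerIdeal φ ↔ Smap φ (toF φ x) = 0 := Iff.rfl

lemma toF_tt (α : A) (v : T) : toF φ (tt φ α v) = Finsupp.single α v := rfl

end MemLemmas

end GW
/-- Kawamoto's theorem, Theorem 2.1: the generalized Witt algebra
`W(A,T,φ)` over a field of characteristic `0` is a simple Lie algebra if and only if
`A ≠ 0` and `φ` is nondegenerate. -/
theorem GW.isSimple_iff
    {F : Type*} [Field F] [CharZero F]
    {A : Type*} [AddCommGroup A]
    {T : Type*} [AddCommGroup T] [Module F T]
    (φ : T →ₗ[F] (A →+ F)) :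
    LieAlgebra.IsSimple F (GW.W F A T φ) ↔ Nontrivial A ∧ GW.Nondeg φ := by
  classical
  constructor
  · intro hs
    have hT : ∃ d : T, d ≠ 0 := by
      by_contra hcon
      push_neg at hcon
      apply hs.non_abelian
      refine abelian_of_phi_zero φ fun d α => ?_
      rw [hcon d, map_zero]
      rfl
    refine ⟨?_, ?_, ?_⟩
    · -- A is nontrivial
      by_contra h
      rw [not_nontrivial_iff_subsingleton] at h
      apply hs.non_abelian
      refine abelian_of_phi_zero φ fun d α => ?_
      rw [Subsingleton.elim α (0 : A), map_zero]
    · -- first nondegeneracy condition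
      intro α₀ hα₀
      by_contra hα0
      obtain ⟨d, hd⟩ := hT
      rcases hs.eq_bot_or_eq_top (quotKerIdeal φ) with hbot | htop
      · have hzK : tt φ α₀ d - tt φ 0 d ∈ quotKerIdeal φ := by
          rw [mem_quotKerIdeal_iff, toF_sub, map_sub, toF_tt, toF_tt, Smap_single, Smap_single,
            (QuotientAddGroup.eq_zero_iff α₀).mpr (show α₀ ∈ bigKer φ from hα₀), QuotientAddGroup.mk_zero, sub_self]
        have hz0 : tt φ α₀ d - tt φ 0 d = 0 := (LieSubmodule.eq_bot_iff _).mp hbot _ hzK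
        have hval : toF φ (tt φ α₀ d - tt φ 0 d) α₀ = d := by
          rw [toF_sub, toF_tt, toF_tt, Finsupp.sub_apply, Finsupp.single_eq_same,
            Finsupp.single_eq_of_ne hα0, sub_zero]
        rw [hz0] at hval
        exact hd hval.symm
      · have hmem : tt φ 0 d ∈ quotKerIdeal φ := by
          rw [htop]; exact LieSubmodule.mem_top _
        rw [mem_quotKerIdeal_iff, toF_tt, Smap_single, QuotientAddGroup.mk_zero] at hmem
        exact hd (Finsupp.single_eq_zero.mp hmem)
    · -- second nondegeneracy condition
      intro d₀ hd₀
      by_contra hd0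
      obtain ⟨e, α₁, he⟩ : ∃ (e : T) (α : A), φ e α ≠ 0 := by
        by_contra hcon
        push_neg at hcon
        exact hs.non_abelian (abelian_of_phi_zero φ hcon)
      rcases hs.eq_bot_or_eq_top (kerIdeal φ) with hbot | htop
      · have hzK : tt φ 0 d₀ ∈ kerIdeal φ := by
          rw [mem_kerIdeal_iff]
          intro α
          rw [toF_tt, Finsupp.single_apply]
          split_ifs
          · rw [LinearMap.mem_ker]
            exact DFunLike.ext _ _ hd₀
          · exact zero_mem _
        have := (LieSubmodule.eq_bot_iff _).mp hbot _ hzK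
        exact hd0 ((tt_eq_zero_iff φ 0 d₀).mp this)
      · have hmem : tt φ 0 e ∈ kerIdeal φ := by
          rw [htop]; exact LieSubmodule.mem_top _
        rw [mem_kerIdeal_iff] at hmem
        have h0 := hmem 0
        rw [toF_tt, Finsupp.single_eq_same, LinearMap.mem_ker] at h0
        apply he
        rw [h0]
        rfl
  · rintro ⟨hA, hnd⟩
    refine ⟨fun I => ?_, ?_⟩
    · rcases eq_or_ne I ⊥ with h | h
      · exact Or.inl h
      · exact Or.inr (ideal_eq_top φ hnd I h)
    · intro hab
      obtain ⟨α, hα⟩ := exists_ne (0 : A)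
      obtain ⟨d, hd⟩ : ∃ d, φ d α ≠ 0 := by
        by_contra h
        push_neg at h
        exact hα (hnd.1 α h)
      have htr := hab.trivial (tt φ 0 d) (tt φ α d)
      rw [bracket_tt, zero_add] at htr
      have hval : φ d α • d - φ d 0 • d = 0 := (tt_eq_zero_iff φ α _).mp htr
      rw [map_zero, zero_smul, sub_zero] at hval
      rcases smul_eq_zero.mp hval with h | h
      · exact hd h
      · rw [h, map_zero] at hd
        exact hd rfl
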